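/- Let β > 0, let K ⊆ V be the union of all minimal strongly connected components C with ρ(A_C) = e^β, let S := {u ∈ V : u ⟶* w for some w ∈ K}, and let D := S \ K. Suppose h⁰ : K → ℝ has nonnegative entries and satisfies A_K·h⁰ = e^β·h⁰. Then the matrix e^β·I − A_D is invertible, and the vector h : V → ℝ defined by h|_K = h⁰, h|_D = (e^β·I − A_D)⁻¹·A_{D,K}·h⁰ (where A_{D,K} is the D×K block of A), and h = 0 on V \ S, has nonnegative entries and satisfies A·h = e^β·h. -/

import Mathlib

open Filter Topology ENNReal

noncomputable section

/-- Every subset of a finite type is a `Fintype` (classically). -/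
noncomputable def setFintypeAux {V : Type*} [Fintype V] (S : Set V) : Fintype S :=
  S.toFinite.fintype

attribute [local instance] setFintypeAux

variable {V : Type*} [Fintype V] [DecidableEq V]

/-- `v ⟶* w` : some power of `A` has a positive `(v,w)` entry. -/
def Reaches (A : Matrix V V ℝ) (v w : V) : Prop := ∃ k : ℕ, 0 < (A ^ k) v w

/-- The spectral radius of a real matrix: the largest absolute value of a complex
eigenvalue. -/
def specRad (A : Matrix V V ℝ) : ℝ :=
  sSup {r : ℝ | ∃ μ ∈ spectrum ℂ (A.map fun t : ℝ => (t : ℂ)), r = ‖μ‖}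

/-- The `S × S` submatrix of `A`. -/
def subMat (A : Matrix V V ℝ) (S : Set V) : Matrix S S ℝ :=
  A.submatrix Subtype.val Subtype.val

/-- `ρ(A_S)`. -/
def specRadSub (A : Matrix V V ℝ) (S : Set V) : ℝ := specRad (subMat A S)

/-- The strongly connected component of `v`. -/
def sccOf (A : Matrix V V ℝ) (v : V) : Set V := {u | Reaches A v u ∧ Reaches A u v}

/-- `C` is a strongly connected component. -/
def IsSCC (A : Matrix V V ℝ) (C : Set V) : Prop := ∃ v : V, C = sccOf A v

/-- `C` is a minimal strongly connected component: every other component `C'` that reaches `C`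
has strictly smaller spectral radius. -/
def IsMinSCC (A : Matrix V V ℝ) (C : Set V) : Prop :=
  IsSCC A C ∧ ∀ C' : Set V, IsSCC A C' → C' ≠ C →
    (∃ v' ∈ C', ∃ u ∈ C, Reaches A v' u) → specRadSub A C' < specRadSub A C

/-- `Z_{w,v}(x) := Σ_{k=0}^∞ x^k (A^k)_{w,v} ∈ [0,∞]`. -/
def Zfun (A : Matrix V V ℝ) (w v : V) (x : ℝ) : ℝ≥0∞ :=
  ∑' k : ℕ, ENNReal.ofReal (x ^ k * (A ^ k) w v)

/-- `Z_v(x) := Σ_{w ∈ V} Z_{w,v}(x)`. -/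
def Zvert (A : Matrix V V ℝ) (v : V) (x : ℝ) : ℝ≥0∞ := ∑ w : V, Zfun A w v x


/-! ### Auxiliary lemmas -/

section AuxLemmas

set_option linter.unusedVariables false
set_option linter.unusedSectionVars false

attribute [local instance] Matrix.linftyOpSemiNormedRing Matrix.linftyOpNormedRing
  Matrix.linftyOpNormedAlgebra

section GeneralMatrix
variable {W : Type*} [Fintype W] [DecidableEq W] {W' : Type*} [Fintype W'] [DecidableEq W']

theorem pow_entry_nonneg (B : Matrix W W ℝ) (hB : ∀ i j, 0 ≤ B i j) :
    ∀ n i j, 0 ≤ (B ^ n) i j := by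
  intro n
  induction n with
  | zero => intro i j; by_cases h : i = j <;> simp [Matrix.one_apply, h]
  | succ n ih =>
      intro i j
      rw [pow_succ, Matrix.mul_apply]
      exact Finset.sum_nonneg fun k _ => mul_nonneg (ih i k) (hB k j)

theorem pow_pos_trans (B : Matrix W W ℝ) (hB : ∀ i j, 0 ≤ B i j) {i j t : W} {k l : ℕ}
    (h1 : 0 < (B ^ k) i j) (h2 : 0 < (B ^ l) j t) : 0 < (B ^ (k + l)) i t := by
  rw [pow_add, Matrix.mul_apply]
  have : 0 < (B ^ k) i j * (B ^ l) j t := mul_pos h1 h2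
  refine lt_of_lt_of_le this ?_
  exact Finset.single_le_sum (f := fun w => (B ^ k) i w * (B ^ l) w t)
    (fun w _ => mul_nonneg (pow_entry_nonneg B hB k i w) (pow_entry_nonneg B hB l w t))
    (Finset.mem_univ j)

theorem real_entry_le_norm (P : Matrix W W ℝ) (hP : ∀ i j, 0 ≤ P i j) (i j : W) :
    P i j ≤ ‖P.map (fun t : ℝ => (t : ℂ))‖ := by
  have h1 : P i j ≤ ‖(P i j : ℂ)‖ := by rw [Complex.norm_real]; exact le_abs_self _
  refine h1.trans ?_
  have h2 : ‖(P.map (fun t : ℝ => (t : ℂ))) i j‖₊ ≤ ‖P.map (fun t : ℝ => (t : ℂ))‖₊ := by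
    rw [Matrix.linfty_opNNNorm_def]
    calc ‖(P.map (fun t : ℝ => (t : ℂ))) i j‖₊ ≤ ∑ k, ‖(P.map (fun t : ℝ => (t : ℂ))) i k‖₊ :=
          Finset.single_le_sum (f := fun k => ‖(P.map (fun t : ℝ => (t : ℂ))) i k‖₊)
            (fun k _ => zero_le) (Finset.mem_univ j)
      _ ≤ _ := Finset.le_sup (f := fun i => ∑ k, ‖(P.map (fun t : ℝ => (t : ℂ))) i k‖₊)
            (Finset.mem_univ i)
  have h2' : ‖(P.map (fun t : ℝ => (t : ℂ))) i j‖ ≤ ‖P.map (fun t : ℝ => (t : ℂ))‖ := h2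
  rw [Matrix.map_apply] at h2'
  exact h2'

theorem map_pow_comm (B : Matrix W W ℝ) (n : ℕ) :
    (B.map (fun t : ℝ => (t : ℂ))) ^ n = (B ^ n).map (fun t : ℝ => (t : ℂ)) := by
  have h : ∀ M : Matrix W W ℝ, M.map (fun t : ℝ => (t : ℂ))
      = (Complex.ofRealHom.mapMatrix : Matrix W W ℝ →+* Matrix W W ℂ) M := fun _ => rfl
  rw [h, h, ← map_pow]

theorem norm_map_le_norm_map (e : W → W') (he : Function.Injective e)
    (P : Matrix W W ℝ) (Q : Matrix W' W' ℝ) (hP : ∀ i j, 0 ≤ P i j)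
    (hPQ : ∀ i j, P i j ≤ Q (e i) (e j)) :
    ‖P.map (fun t : ℝ => (t : ℂ))‖₊ ≤ ‖Q.map (fun t : ℝ => (t : ℂ))‖₊ := by
  rw [Matrix.linfty_opNNNorm_def, Matrix.linfty_opNNNorm_def]
  refine Finset.sup_le fun i _ => ?_
  calc (∑ j, ‖(P.map (fun t : ℝ => (t : ℂ))) i j‖₊)
      ≤ ∑ j, ‖(Q.map (fun t : ℝ => (t : ℂ))) (e i) (e j)‖₊ := by
        refine Finset.sum_le_sum fun j _ => ?_
        simp only [Matrix.map_apply, Complex.nnnorm_real]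
        have : |P i j| ≤ |Q (e i) (e j)| := by
          rw [abs_of_nonneg (hP i j), abs_of_nonneg ((hP i j).trans (hPQ i j))]
          exact hPQ i j
        exact this
    _ = ∑ j ∈ Finset.univ.image e, ‖(Q.map (fun t : ℝ => (t : ℂ))) (e i) j‖₊ := by
        rw [Finset.sum_image (fun a _ b _ h => he h)]
    _ ≤ ∑ j, ‖(Q.map (fun t : ℝ => (t : ℂ))) (e i) j‖₊ :=
        Finset.sum_le_sum_of_subset (Finset.subset_univ _)
    _ ≤ _ := Finset.le_sup (f := fun i => ∑ j, ‖(Q.map (fun t : ℝ => (t : ℂ))) i j‖₊)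
          (Finset.mem_univ (e i))

theorem spectralRadius_mono_of_nnnorm_pow_le (a : Matrix W W ℂ) (b : Matrix W' W' ℂ)
    (h : ∀ n : ℕ, ‖a ^ n‖₊ ≤ ‖b ^ n‖₊) : spectralRadius ℂ a ≤ spectralRadius ℂ b := by
  refine le_of_tendsto_of_tendsto'
    (spectrum.pow_nnnorm_pow_one_div_tendsto_nhds_spectralRadius a)
    (spectrum.pow_nnnorm_pow_one_div_tendsto_nhds_spectralRadius b) fun n => ?_
  exact ENNReal.rpow_le_rpow (by exact_mod_cast h n) (by positivity)

theorem spectralRadius_le_ofReal_sSup (M : Matrix W W ℂ) :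
    spectralRadius ℂ M
      ≤ ENNReal.ofReal (sSup {r : ℝ | ∃ μ ∈ spectrum ℂ M, r = ‖μ‖}) := by
  have hset : {r : ℝ | ∃ μ ∈ spectrum ℂ M, r = ‖μ‖}
      = (‖·‖) '' spectrum ℂ M := by
    ext r; constructor
    · rintro ⟨μ, hμ, rfl⟩; exact ⟨μ, hμ, rfl⟩
    · rintro ⟨μ, hμ, rfl⟩; exact ⟨μ, hμ, rfl⟩
  have hbdd : BddAbove ((‖·‖) '' spectrum ℂ M) :=
    ((spectrum.isCompact M).image continuous_norm).bddAbove
  rw [spectralRadius, hset]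
  refine iSup₂_le fun μ hμ => ?_
  have h1 : (‖μ‖₊ : ℝ≥0∞) = ENNReal.ofReal (‖μ‖) := by
    rw [ofReal_norm, enorm_eq_nnnorm]
  rw [h1]
  exact ENNReal.ofReal_le_ofReal (le_csSup hbdd ⟨μ, hμ, rfl⟩)

/-- The key resolvent lemma: if every complex eigenvalue of a nonnegative matrix `B` has
absolute value `< r`, then `r•1 - B` is invertible with an entrywise-nonnegative inverse. -/
theorem resolvent_isUnit_and_inv_nonneg (B : Matrix W W ℝ) (hB : ∀ i j, 0 ≤ B i j)
    (r : ℝ) (hr : 0 < r)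
    (hspec : ∀ μ ∈ spectrum ℂ (B.map fun t : ℝ => (t : ℂ)), ‖μ‖ < r) :
    IsUnit (r • (1 : Matrix W W ℝ) - B) ∧
      ∀ i j, 0 ≤ (r • (1 : Matrix W W ℝ) - B)⁻¹ i j := by
  rcases isEmpty_or_nonempty W with hW | hW
  · have h1 : (r • (1 : Matrix W W ℝ) - B) = 1 := by
      ext i j; exact (IsEmpty.false i).elim
    rw [h1]
    exact ⟨isUnit_one, fun i j => (IsEmpty.false i).elim⟩
  set Mc : Matrix W W ℂ := B.map (fun t : ℝ => (t : ℂ)) with hMc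
  have hrad : spectralRadius ℂ Mc < ENNReal.ofReal r := by
    rcases (spectrum ℂ Mc).eq_empty_or_nonempty with hσ | hσ
    · rw [spectralRadius, hσ]
      simpa using ENNReal.ofReal_pos.mpr hr
    · obtain ⟨μ0, hμ0, hmax⟩ :=
        (spectrum.isCompact Mc).exists_isMaxOn hσ continuous_norm.continuousOn
      have h1 : spectralRadius ℂ Mc ≤ ENNReal.ofReal (‖μ0‖) := by
        refine iSup₂_le fun μ hμ => ?_
        have : (‖μ‖₊ : ℝ≥0∞) = ENNReal.ofReal (‖μ‖) := by
          rw [ofReal_norm, enorm_eq_nnnorm]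
        rw [this]
        exact ENNReal.ofReal_le_ofReal (hmax hμ)
      exact lt_of_le_of_lt h1 ((ENNReal.ofReal_lt_ofReal_iff hr).mpr (hspec μ0 hμ0))
  obtain ⟨r0, hr00, h1, h2⟩ := ENNReal.lt_iff_exists_real_btwn.1 hrad
  have hr0r : r0 < r := by rwa [ENNReal.ofReal_lt_ofReal_iff hr] at h2
  have hev :=
    (spectrum.pow_nnnorm_pow_one_div_tendsto_nhds_spectralRadius Mc).eventually_lt_const h1
  obtain ⟨N, hN⟩ := eventually_atTop.1 hev
  have hkey : ∀ n, N + 1 ≤ n → ∀ i j, (B ^ n) i j ≤ r0 ^ n := by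
    intro n hn i j
    have hn0 : (n : ℝ) ≠ 0 := by
      have : 0 < n := lt_of_lt_of_le (Nat.succ_pos N) hn
      exact_mod_cast this.ne'
    have hx := hN n (le_trans (Nat.le_succ N) hn)
    have hx2 : (‖Mc ^ n‖₊ : ℝ≥0∞) ≤ ENNReal.ofReal r0 ^ (n : ℝ) := by
      have := ENNReal.rpow_le_rpow hx.le (Nat.cast_nonneg n : (0:ℝ) ≤ n)
      rwa [← ENNReal.rpow_mul, one_div, inv_mul_cancel₀ hn0, ENNReal.rpow_one] at this
    have hx3 : (‖Mc ^ n‖₊ : ℝ≥0∞) ≤ ENNReal.ofReal (r0 ^ n) := by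
      rwa [ENNReal.ofReal_rpow_of_nonneg hr00 (Nat.cast_nonneg n), Real.rpow_natCast] at hx2
    have hx4 : ‖Mc ^ n‖ ≤ r0 ^ n := by
      rw [← enorm_eq_nnnorm, ← ofReal_norm] at hx3
      exact (ENNReal.ofReal_le_ofReal_iff (by positivity)).1 hx3
    have hx5 : (B ^ n) i j ≤ ‖Mc ^ n‖ := by
      rw [hMc, map_pow_comm]
      exact real_entry_le_norm (B ^ n) (pow_entry_nonneg B hB n) i j
    exact hx5.trans hx4
  have hgeo : Summable (fun n : ℕ => (r⁻¹ * r0) ^ n) := by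
    refine summable_geometric_of_lt_one (by positivity) ?_
    rw [inv_mul_eq_div]
    exact (div_lt_one hr).mpr hr0r
  have hsum : ∀ i j : W, Summable (fun n : ℕ => r⁻¹ ^ (n + 1) * (B ^ n) i j) := by
    intro i j
    rw [← summable_nat_add_iff (N + 1)]
    have hb : ∀ n : ℕ, r⁻¹ ^ (n + (N + 1) + 1) * (B ^ (n + (N + 1))) i j
        ≤ (r⁻¹ ^ (N + 2) * r0 ^ (N + 1)) * (r⁻¹ * r0) ^ n := by
      intro n
      have h1 : (B ^ (n + (N + 1))) i j ≤ r0 ^ (n + (N + 1)) :=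
        hkey _ (by omega) i j
      have h2 : r⁻¹ ^ (n + (N + 1) + 1) * (B ^ (n + (N + 1))) i j
          ≤ r⁻¹ ^ (n + (N + 1) + 1) * r0 ^ (n + (N + 1)) :=
        mul_le_mul_of_nonneg_left h1 (by positivity)
      refine h2.trans_eq ?_
      rw [show n + (N + 1) + 1 = n + (N + 2) by omega, pow_add, pow_add, mul_pow]
      ring
    refine Summable.of_nonneg_of_le (fun n => ?_) hb (hgeo.mul_left _)
    exact mul_nonneg (by positivity) (pow_entry_nonneg B hB _ i j)
  set M : Matrix W W ℝ := r • (1 : Matrix W W ℝ) - B with hM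
  set T : Matrix W W ℝ := Matrix.of (fun i j => ∑' n : ℕ, r⁻¹ ^ (n + 1) * (B ^ n) i j)
    with hT
  have hMBn : ∀ n : ℕ, M * (B ^ n) = r • B ^ n - B ^ (n + 1) := by
    intro n
    rw [hM, sub_mul, smul_mul_assoc, one_mul, ← pow_succ' B n]
  have key : M * T = 1 := by
    ext i j
    rw [Matrix.mul_apply]
    have hstep1 : ∀ k : W, M i k * T k j
        = ∑' n : ℕ, M i k * (r⁻¹ ^ (n + 1) * (B ^ n) k j) := by
      intro k
      rw [hT, Matrix.of_apply, ← tsum_mul_left]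
    have hsum2 : ∀ k : W, Summable (fun n : ℕ => M i k * (r⁻¹ ^ (n + 1) * (B ^ n) k j)) :=
      fun k => (hsum k j).mul_left _
    have hstep2 : (∑ k : W, M i k * T k j)
        = ∑' n : ℕ, ∑ k : W, M i k * (r⁻¹ ^ (n + 1) * (B ^ n) k j) := by
      rw [Finset.sum_congr rfl fun k _ => hstep1 k]
      exact (Summable.tsum_finsetSum fun k _ => hsum2 k).symm
    set f : ℕ → ℝ := fun n => r⁻¹ ^ n * (B ^ n) i j with hf
    have hrinv : ∀ n : ℕ, r⁻¹ ^ (n + 1) * r = r⁻¹ ^ n := by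
      intro n
      rw [pow_succ, mul_assoc, inv_mul_cancel₀ hr.ne']
      rw [mul_one]
    have hstep3 : ∀ n : ℕ, (∑ k : W, M i k * (r⁻¹ ^ (n + 1) * (B ^ n) k j))
        = f n - f (n + 1) := by
      intro n
      have e1 : (∑ k : W, M i k * (r⁻¹ ^ (n + 1) * (B ^ n) k j))
          = r⁻¹ ^ (n + 1) * ∑ k : W, M i k * (B ^ n) k j := by
        rw [Finset.mul_sum]
        exact Finset.sum_congr rfl fun k _ => by ring
      rw [e1, show (∑ k : W, M i k * (B ^ n) k j) = (M * (B ^ n)) i j from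
        (Matrix.mul_apply).symm, hMBn n]
      have : (r • B ^ n - B ^ (n + 1)) i j = r * (B ^ n) i j - (B ^ (n + 1)) i j := by
        simp [Matrix.sub_apply]
      rw [this, mul_sub, ← mul_assoc, hrinv n, hf]
    have hfsummable : Summable f := by
      have : ∀ n : ℕ, f n = r * (r⁻¹ ^ (n + 1) * (B ^ n) i j) := by
        intro n
        rw [hf, ← mul_assoc, mul_comm r, hrinv n]
      rw [funext this]
      exact (hsum i j).mul_left r
    have hftendsto : Tendsto f atTop (𝓝 0) := hfsummable.tendsto_atTop_zero
    have hgsummable : Summable (fun n => f n - f (n + 1)) :=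
      hfsummable.sub ((summable_nat_add_iff 1).2 hfsummable)
    have hpartial : Tendsto (fun n => ∑ k ∈ Finset.range n, (f k - f (k + 1))) atTop
        (𝓝 (f 0 - 0)) := by
      simp_rw [Finset.sum_range_sub' f]
      exact tendsto_const_nhds.sub hftendsto
    have htsum : (∑' n : ℕ, (f n - f (n + 1))) = f 0 := by
      have := tendsto_nhds_unique hgsummable.hasSum.tendsto_sum_nat hpartial
      rw [this, sub_zero]
    rw [hstep2, tsum_congr hstep3, htsum]
    show r⁻¹ ^ 0 * (B ^ 0) i j = _
    simp
  have hinvertible : Invertible M := invertibleOfRightInverse _ _ key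
  have hIsUnit : IsUnit M := isUnit_of_invertible M
  have hinv : M⁻¹ = T := Matrix.inv_eq_right_inv key
  refine ⟨hIsUnit, ?_⟩
  intro i j
  rw [hinv, hT]
  exact tsum_nonneg fun n => mul_nonneg (by positivity) (pow_entry_nonneg B hB n i j)

end GeneralMatrix

theorem reaches_refl (A : Matrix V V ℝ) (v : V) : Reaches A v v :=
  ⟨0, by simp [Matrix.one_apply]⟩

theorem reaches_trans (A : Matrix V V ℝ) (hA : ∀ i j, 0 ≤ A i j) {u v w : V}
    (h1 : Reaches A u v) (h2 : Reaches A v w) : Reaches A u w := by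
  obtain ⟨k, hk⟩ := h1; obtain ⟨l, hl⟩ := h2
  exact ⟨k + l, pow_pos_trans A hA hk hl⟩

theorem mem_sccOf_self (A : Matrix V V ℝ) (v : V) : v ∈ sccOf A v :=
  ⟨reaches_refl A v, reaches_refl A v⟩

theorem sum_set_coe {M : Type*} [AddCommMonoid M] (T : Set V) (f : V → M) :
    (∑ x : T, f x.val) = ∑ x ∈ T.toFinset, f x :=
  (Finset.sum_subtype T.toFinset (fun x => Set.mem_toFinset) f).symm

theorem sum_subtype_le_sum_univ (T : Set V) (f : V → ℝ) (hf : ∀ v, 0 ≤ f v) :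
    (∑ x : T, f x.val) ≤ ∑ x : V, f x := by
  rw [sum_set_coe]
  exact Finset.sum_le_sum_of_subset_of_nonneg (Finset.subset_univ _)
    (fun i _ _ => hf i)

theorem sum_eq_sum_subtype_of_support {M : Type*} [AddCommMonoid M] (T : Set V) (f : V → M)
    (hf : ∀ v, v ∉ T → f v = 0) : (∑ v : V, f v) = ∑ v : T, f v.val := by
  classical
  rw [sum_set_coe]
  exact (Finset.sum_subset (Finset.subset_univ _)
    (fun x _ hx => hf x (by simpa [Set.mem_toFinset] using hx))).symm

theorem sum_split_two (P Q : Set V) (hPQ : Disjoint P Q) (g : V → ℝ)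
    (hg : ∀ v, v ∉ P → v ∉ Q → g v = 0) :
    (∑ v : V, g v) = (∑ v : P, g v.val) + (∑ v : Q, g v.val) := by
  classical
  have h1 : (∑ v : V, g v) = ∑ v ∈ P.toFinset ∪ Q.toFinset, g v := by
    refine (Finset.sum_subset (Finset.subset_univ _) ?_).symm
    intro x _ hx
    rw [Finset.mem_union, Set.mem_toFinset, Set.mem_toFinset] at hx
    push_neg at hx
    exact hg x hx.1 hx.2
  rw [h1, Finset.sum_union (by rwa [Set.disjoint_toFinset]), sum_set_coe, sum_set_coe]

theorem subMat_pow_le (A : Matrix V V ℝ) (hA : ∀ i j, 0 ≤ A i j) (T : Set V) :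
    ∀ (n : ℕ) (i j : T), ((subMat A T) ^ n) i j ≤ (A ^ n) i.val j.val := by
  intro n
  induction n with
  | zero =>
      intro i j
      rw [pow_zero, pow_zero]
      by_cases h : i = j
      · subst h; simp [Matrix.one_apply]
      · rw [Matrix.one_apply_ne h, Matrix.one_apply_ne (fun hc => h (Subtype.ext hc))]
  | succ n ih =>
      intro i j
      rw [pow_succ, pow_succ, Matrix.mul_apply, Matrix.mul_apply]
      calc ∑ k : T, ((subMat A T) ^ n) i k * (subMat A T) k j
          ≤ ∑ k : T, (A ^ n) i.val k.val * A k.val j.val := by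
            refine Finset.sum_le_sum fun k _ => ?_
            exact mul_le_mul_of_nonneg_right (ih i k) (hA k.val j.val)
        _ ≤ ∑ k : V, (A ^ n) i.val k * A k j.val :=
            sum_subtype_le_sum_univ T _ (fun v =>
              mul_nonneg (pow_entry_nonneg A hA n i.val v) (hA v j.val))

theorem subMat_pow_le_subMat (A : Matrix V V ℝ) (hA : ∀ i j, 0 ≤ A i j) {T T' : Set V}
    (hTT : T ⊆ T') :
    ∀ (n : ℕ) (i j : T), ((subMat A T) ^ n) i j
      ≤ ((subMat A T') ^ n) ⟨i.val, hTT i.2⟩ ⟨j.val, hTT j.2⟩ := by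
  intro n
  induction n with
  | zero =>
      intro i j
      rw [pow_zero, pow_zero]
      by_cases h : i = j
      · subst h; simp [Matrix.one_apply]
      · have hne : (⟨i.val, hTT i.2⟩ : T') ≠ ⟨j.val, hTT j.2⟩ := by
          intro hc
          exact h (Subtype.ext (Subtype.mk_eq_mk.mp hc))
        rw [Matrix.one_apply_ne h, Matrix.one_apply_ne hne]
  | succ n ih =>
      intro i j
      rw [pow_succ, pow_succ, Matrix.mul_apply, Matrix.mul_apply]
      have hnn' : ∀ (m : ℕ) (a b : T'), 0 ≤ ((subMat A T') ^ m) a b :=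
        fun m a b => pow_entry_nonneg (subMat A T') (fun x y => hA x.val y.val) m a b
      have step1 : ∑ k : T, ((subMat A T) ^ n) i k * (subMat A T) k j
          ≤ ∑ k : T, ((subMat A T') ^ n) ⟨i.val, hTT i.2⟩ ⟨k.val, hTT k.2⟩
              * (subMat A T') ⟨k.val, hTT k.2⟩ ⟨j.val, hTT j.2⟩ := by
        refine Finset.sum_le_sum fun k _ => ?_
        exact mul_le_mul_of_nonneg_right (ih i k) (hA k.val j.val)
      refine le_trans step1 ?_
      let e : T → T' := fun k => ⟨k.val, hTT k.2⟩
      have he : Function.Injective e := fun a b hab => Subtype.ext (Subtype.mk_eq_mk.mp hab)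
      have : ∑ k : T, (fun k' : T' => ((subMat A T') ^ n) ⟨i.val, hTT i.2⟩ k'
              * (subMat A T') k' ⟨j.val, hTT j.2⟩) (e k)
          ≤ ∑ k' : T', ((subMat A T') ^ n) ⟨i.val, hTT i.2⟩ k'
              * (subMat A T') k' ⟨j.val, hTT j.2⟩ := by
        rw [← Finset.sum_image (f := fun k' : T' => ((subMat A T') ^ n) ⟨i.val, hTT i.2⟩ k'
              * (subMat A T') k' ⟨j.val, hTT j.2⟩) (g := e) (fun a _ b _ h => he h)]
        refine Finset.sum_le_sum_of_subset_of_nonneg (Finset.subset_univ _) fun k' _ _ => ?_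
        exact mul_nonneg (hnn' n _ k') (hA k'.val j.val)
      exact this

/-- Membership in the spectrum of a principal submatrix, in terms of eigenvectors
supported on the subset. -/
theorem mem_spectrum_iff_exists_supported (A : Matrix V V ℝ) (T : Set V) (μ : ℂ) :
    μ ∈ spectrum ℂ ((subMat A T).map (fun t : ℝ => (t : ℂ))) ↔
      ∃ z : V → ℂ, z ≠ 0 ∧ (∀ v, v ∉ T → z v = 0) ∧
        (∀ v ∈ T, (∑ w : V, (A v w : ℂ) * z w) = μ * z v) := by
  classical
  set Mc := (subMat A T).map (fun t : ℝ => (t : ℂ)) with hMc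
  have hdet : μ ∈ spectrum ℂ Mc ↔ ∃ v : T → ℂ, v ≠ 0 ∧ Mc.mulVec v = μ • v := by
    rw [spectrum.mem_iff]
    have h1 : ¬IsUnit (algebraMap ℂ (Matrix T T ℂ) μ - Mc) ↔
        (algebraMap ℂ (Matrix T T ℂ) μ - Mc).det = 0 := by
      rw [Matrix.isUnit_iff_isUnit_det, isUnit_iff_ne_zero, not_not]
    rw [h1, ← Matrix.exists_mulVec_eq_zero_iff]
    constructor
    · rintro ⟨v, hv0, hv⟩
      refine ⟨v, hv0, ?_⟩
      rw [Matrix.sub_mulVec, Algebra.algebraMap_eq_smul_one, Matrix.smul_mulVec,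
        Matrix.one_mulVec, sub_eq_zero] at hv
      exact hv.symm
    · rintro ⟨v, hv0, hv⟩
      refine ⟨v, hv0, ?_⟩
      rw [Matrix.sub_mulVec, Algebra.algebraMap_eq_smul_one, Matrix.smul_mulVec,
        Matrix.one_mulVec, sub_eq_zero, hv]
  rw [hdet]
  constructor
  · rintro ⟨v, hv0, hv⟩
    obtain ⟨t, ht⟩ := Function.ne_iff.1 hv0
    refine ⟨fun u => if h : u ∈ T then v ⟨u, h⟩ else 0, ?_, ?_, ?_⟩
    · refine Function.ne_iff.2 ⟨t.val, ?_⟩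
      show (if h : (t : V) ∈ T then v ⟨(t : V), h⟩ else 0) ≠ (0 : V → ℂ) t.val
      rw [dif_pos t.2]
      simpa using ht
    · intro u hu; exact dif_neg hu
    · intro u hu
      have hsupp : ∀ w, w ∉ T → (A u w : ℂ) * (if h : w ∈ T then v ⟨w, h⟩ else 0) = 0 := by
        intro w hw; rw [dif_neg hw, mul_zero]
      show (∑ w : V, (A u w : ℂ) * (if h : w ∈ T then v ⟨w, h⟩ else 0))
          = μ * (if h : u ∈ T then v ⟨u, h⟩ else 0)
      rw [sum_eq_sum_subtype_of_support T _ hsupp, dif_pos hu]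
      have heq : ∀ w : T, (A u w.val : ℂ) * (if h : w.val ∈ T then v ⟨w.val, h⟩ else 0)
          = Mc ⟨u, hu⟩ w * v w := by
        intro w
        rw [dif_pos w.2]
        rfl
      rw [Finset.sum_congr rfl fun w _ => heq w,
        show (∑ w : T, Mc ⟨u, hu⟩ w * v w) = Mc.mulVec v ⟨u, hu⟩ from rfl, hv]
      simp
  · rintro ⟨z, hz0, hzsupp, hzeq⟩
    obtain ⟨u, hu⟩ := Function.ne_iff.1 hz0
    have huT : u ∈ T := by
      by_contra h
      exact hu (by simpa using hzsupp u h)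
    refine ⟨fun t => z t.val, Function.ne_iff.2 ⟨⟨u, huT⟩, by simpa using hu⟩, ?_⟩
    funext t
    show (∑ w : T, Mc t w * z w.val) = μ • (fun t : T => z t.val) t
    have hsupp : ∀ w, w ∉ T → (A t.val w : ℂ) * z w = 0 := by
      intro w hw; rw [hzsupp w hw, mul_zero]
    have : (∑ w : T, Mc t w * z w.val) = ∑ w : T, (A t.val w.val : ℂ) * z w.val :=
      Finset.sum_congr rfl fun w _ => rfl
    rw [this, ← sum_eq_sum_subtype_of_support T _ hsupp, hzeq t.val t.2]
    simp

theorem abs_lt_of_mem_spectrum_subMat_subset (A : Matrix V V ℝ) (hA : ∀ i j, 0 ≤ A i j)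
    {C C' : Set V} (hCC' : C ⊆ C') {μ : ℂ}
    (hμ : μ ∈ spectrum ℂ ((subMat A C).map (fun t : ℝ => (t : ℂ))))
    {x : ℝ} (hx : specRadSub A C' < x) (hx0 : 0 < x) :
    ‖μ‖ < x := by
  have h1 : (‖μ‖₊ : ℝ≥0∞) ≤ spectralRadius ℂ ((subMat A C).map (fun t : ℝ => (t : ℂ))) :=
    le_iSup₂ (f := fun k (_ : k ∈ spectrum ℂ ((subMat A C).map (fun t : ℝ => (t : ℂ)))) =>
      (‖k‖₊ : ℝ≥0∞)) μ hμ
  have h2 : spectralRadius ℂ ((subMat A C).map (fun t : ℝ => (t : ℂ)))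
      ≤ spectralRadius ℂ ((subMat A C').map (fun t : ℝ => (t : ℂ))) := by
    refine spectralRadius_mono_of_nnnorm_pow_le _ _ fun n => ?_
    rw [map_pow_comm, map_pow_comm]
    refine norm_map_le_norm_map (fun k : C => (⟨k.val, hCC' k.2⟩ : C'))
      (fun a b hab => Subtype.ext (Subtype.mk_eq_mk.mp hab)) _ _
      (fun i j => pow_entry_nonneg (subMat A C) (fun a b => hA a.val b.val) n i j)
      (fun i j => subMat_pow_le_subMat A hA hCC' n i j)
  have h3 : spectralRadius ℂ ((subMat A C').map (fun t : ℝ => (t : ℂ)))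
      ≤ ENNReal.ofReal (specRadSub A C') :=
    spectralRadius_le_ofReal_sSup ((subMat A C').map (fun t : ℝ => (t : ℂ)))
  have h4 : (‖μ‖₊ : ℝ≥0∞) ≤ ENNReal.ofReal (specRadSub A C') := le_trans h1 (le_trans h2 h3)
  have h5 : ‖μ‖ ≤ max (specRadSub A C') 0 := by
    have h6 := ENNReal.toReal_mono ENNReal.ofReal_ne_top h4
    rw [ENNReal.coe_toReal, coe_nnnorm, ENNReal.toReal_ofReal'] at h6
    exact h6
  exact lt_of_le_of_lt h5 (max_lt hx hx0)

/-- The key spectral estimate: if every strongly connected component through a point of `D`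
has spectral radius `< x`, then every complex eigenvalue of any principal submatrix
indexed by a subset of `D` has absolute value `< x`. -/
theorem spec_lt_of_all_scc (A : Matrix V V ℝ) (hA : ∀ i j, 0 ≤ A i j)
    {x : ℝ} (hx0 : 0 < x) (D : Set V)
    (hscc : ∀ u ∈ D, specRadSub A (sccOf A u) < x) :
    ∀ T : Set V, T ⊆ D → ∀ μ ∈ spectrum ℂ ((subMat A T).map (fun t : ℝ => (t : ℂ))),
      ‖μ‖ < x := by
  classical
  suffices H : ∀ n : ℕ, ∀ T : Set V, T ⊆ D → T.ncard ≤ n →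
      ∀ μ ∈ spectrum ℂ ((subMat A T).map (fun t : ℝ => (t : ℂ))), ‖μ‖ < x by
    intro T hTD
    exact H T.ncard T hTD le_rfl
  intro n
  induction n with
  | zero =>
      intro T hTD hcard μ hμ
      obtain ⟨z, hz0, hzsupp, hzeq⟩ := (mem_spectrum_iff_exists_supported A T μ).1 hμ
      obtain ⟨u, hu⟩ := Function.ne_iff.1 hz0
      have huT : u ∈ T := by
        by_contra h
        exact hu (by simpa using hzsupp u h)
      have hTempty : T = ∅ :=
        (Set.ncard_eq_zero T.toFinite).1 (le_antisymm hcard (Nat.zero_le _))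
      rw [hTempty] at huT
      exact absurd huT (Set.notMem_empty u)
  | succ n ih =>
      intro T hTD hcard μ hμ
      obtain ⟨z, hz0, hzsupp, hzeq⟩ := (mem_spectrum_iff_exists_supported A T μ).1 hμ
      obtain ⟨u0, hu0⟩ := Function.ne_iff.1 hz0
      have hu0T : u0 ∈ T := by
        by_contra h
        exact hu0 (by simpa using hzsupp u0 h)
      set R : T → T → Prop := fun a b => ∃ k : ℕ, 0 < ((subMat A T) ^ k) a b with hR
      have hRrefl : ∀ a : T, R a a := fun a => ⟨0, by simp [Matrix.one_apply]⟩
      have hRtrans : ∀ a b c : T, R a b → R b c → R a c := by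
        rintro a b c ⟨k, hk⟩ ⟨l, hl⟩
        exact ⟨k + l, pow_pos_trans (subMat A T) (fun i j => hA i.val j.val) hk hl⟩
      have hTne : (Finset.univ : Finset T).Nonempty := ⟨⟨u0, hu0T⟩, Finset.mem_univ _⟩
      obtain ⟨us, _, hmin⟩ := Finset.exists_min_image Finset.univ
        (fun a : T => (Finset.univ.filter (fun b : T => R b a)).card) hTne
      have hmax : ∀ w : T, R w us → R us w := by
        intro w hw
        by_contra hnw
        have hsubset : Finset.univ.filter (fun b : T => R b w)
            ⊆ Finset.univ.filter (fun b : T => R b us) := by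
          intro b hb
          simp only [Finset.mem_filter, Finset.mem_univ, true_and] at hb ⊢
          exact hRtrans b w us hb hw
        have hmem1 : us ∈ Finset.univ.filter (fun b : T => R b us) := by
          simp only [Finset.mem_filter, Finset.mem_univ, true_and]
          exact hRrefl us
        have hmem2 : us ∉ Finset.univ.filter (fun b : T => R b w) := by
          simp only [Finset.mem_filter, Finset.mem_univ, true_and]
          exact hnw
        have hlt : (Finset.univ.filter (fun b : T => R b w)).card
            < (Finset.univ.filter (fun b : T => R b us)).card :=
          Finset.card_lt_card ⟨hsubset, fun hcc => hmem2 (hcc hmem1)⟩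
        exact absurd (hmin w (Finset.mem_univ w)) (not_le.mpr hlt)
      set Cs : Set V := {w | ∃ h : w ∈ T, R ⟨w, h⟩ us ∧ R us ⟨w, h⟩} with hCs
      have hCsT : Cs ⊆ T := fun w hw => hw.1
      have husCs : us.val ∈ Cs := ⟨us.2, hRrefl us, hRrefl us⟩
      have hnoedge : ∀ w ∈ T, w ∉ Cs → ∀ c ∈ Cs, A w c = 0 := by
        intro w hwT hwCs c hc
        by_contra hne
        obtain ⟨hcT, hc1, hc2⟩ := hc
        have hpos : 0 < A w c := lt_of_le_of_ne (hA w c) (Ne.symm hne)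
        have h1 : R ⟨w, hwT⟩ ⟨c, hcT⟩ := ⟨1, by rw [pow_one]; exact hpos⟩
        have h2 : R ⟨w, hwT⟩ us := hRtrans _ _ _ h1 hc1
        exact hwCs ⟨hwT, h2, hmax _ h2⟩
      by_cases hcase : ∀ w, w ∈ T → w ∉ Cs → z w = 0
      · have hμ' : μ ∈ spectrum ℂ ((subMat A Cs).map (fun t : ℝ => (t : ℂ))) := by
          refine (mem_spectrum_iff_exists_supported A Cs μ).2 ⟨z, hz0, ?_, ?_⟩
          · intro v hv
            by_cases hvT : v ∈ T
            · exact hcase v hvT hv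
            · exact hzsupp v hvT
          · intro v hv
            exact hzeq v (hCsT hv)
        have hCssub : Cs ⊆ sccOf A us.val := by
          rintro w ⟨hwT, h1, h2⟩
          have hr1 : Reaches A us.val w := by
            obtain ⟨k, hk⟩ := h2
            exact ⟨k, lt_of_lt_of_le hk (subMat_pow_le A hA T k us ⟨w, hwT⟩)⟩
          have hr2 : Reaches A w us.val := by
            obtain ⟨k, hk⟩ := h1
            exact ⟨k, lt_of_lt_of_le hk (subMat_pow_le A hA T k ⟨w, hwT⟩ us)⟩
          exact ⟨hr1, hr2⟩
        exact abs_lt_of_mem_spectrum_subMat_subset A hA hCssub hμ'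
          (hscc us.val (hTD us.2)) hx0
      · push_neg at hcase
        obtain ⟨w0, hw0T, hw0Cs, hzw0⟩ := hcase
        obtain ⟨T', hT'⟩ : ∃ T' : Set V, T' = T \ Cs := ⟨_, rfl⟩
        have hμ' : μ ∈ spectrum ℂ ((subMat A T').map (fun t : ℝ => (t : ℂ))) := by
          refine (mem_spectrum_iff_exists_supported A T' μ).2
            ⟨fun v => if v ∈ Cs then 0 else z v, ?_, ?_, ?_⟩
          · refine Function.ne_iff.2 ⟨w0, ?_⟩
            show (if w0 ∈ Cs then 0 else z w0) ≠ (0 : V → ℂ) w0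
            rw [if_neg hw0Cs]
            simpa using hzw0
          · intro v hv
            rw [hT'] at hv
            show (if v ∈ Cs then 0 else z v) = 0
            by_cases h1 : v ∈ Cs
            · rw [if_pos h1]
            · rw [if_neg h1]
              refine hzsupp v ?_
              intro hvT
              exact hv ⟨hvT, h1⟩
          · intro v hv
            rw [hT'] at hv
            obtain ⟨hvT, hvCs⟩ := hv
            show (∑ w : V, (A v w : ℂ) * (if w ∈ Cs then 0 else z w))
                = μ * (if v ∈ Cs then 0 else z v)
            have hterm : ∀ w : V, (A v w : ℂ) * (if w ∈ Cs then 0 else z w)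
                = (A v w : ℂ) * z w := by
              intro w
              by_cases h1 : w ∈ Cs
              · rw [if_pos h1, hnoedge v hvT hvCs w h1]
                simp
              · rw [if_neg h1]
            rw [Finset.sum_congr rfl fun w _ => hterm w, hzeq v hvT, if_neg hvCs]
        have hlt : T'.ncard < T.ncard := by
          rw [hT']
          refine Set.ncard_lt_ncard ?_ T.toFinite
          rw [Set.ssubset_def]
          refine ⟨Set.diff_subset, fun hcontra => ?_⟩
          exact (hcontra us.2).2 husCs
        refine ih T' ?_ (by omega) μ hμ'
        rw [hT']
        exact fun v hv => hTD hv.1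

end AuxLemmas

/-- `K` is the union of all minimal strongly connected components with
`ρ(A_C) = e^β`, `S := {u : u ⟶* w for some w ∈ K}`, `D := S \ K`. Any nonnegative `h⁰` with
`A_K h⁰ = e^β h⁰` extends to a nonnegative `h` with `A h = e^β h` via
`h|_K = h⁰`, `h|_D = (e^β I − A_D)⁻¹ A_{D,K} h⁰`, `h = 0` off `S`; moreover `e^β I − A_D` is
invertible. -/
theorem stmt16 {V : Type*} [Fintype V] [DecidableEq V] [Nonempty V]
    (A : Matrix V V ℝ) (hA : ∀ i j, 0 ≤ A i j)
    (β : ℝ) (hβ : 0 < β)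
    (K S D : Set V)
    (hK : K = {u : V | ∃ C : Set V, IsMinSCC A C ∧ specRadSub A C = Real.exp β ∧ u ∈ C})
    (hS : S = {u : V | ∃ w ∈ K, Reaches A u w})
    (hD : D = S \ K)
    (h0 : K → ℝ) (h0pos : ∀ u, 0 ≤ h0 u)
    (h0harm : (subMat A K).mulVec h0 = Real.exp β • h0) :
    IsUnit (Real.exp β • (1 : Matrix D D ℝ) - subMat A D) ∧
    ∃ h : V → ℝ,
      (∀ u (hu : u ∈ K), h u = h0 ⟨u, hu⟩) ∧
      (∀ u (hu : u ∈ D), h u =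
        ((Real.exp β • (1 : Matrix D D ℝ) - subMat A D)⁻¹ *
          A.submatrix (Subtype.val : D → V) (Subtype.val : K → V)).mulVec h0 ⟨u, hu⟩) ∧
      (∀ u, u ∉ S → h u = 0) ∧
      (∀ u, 0 ≤ h u) ∧ A.mulVec h = Real.exp β • h := by
  classical
  have hrpos : 0 < Real.exp β := Real.exp_pos β
  -- basic structural facts
  have hKS : K ⊆ S := by
    intro u hu
    rw [hS]
    exact ⟨u, hu, reaches_refl A u⟩
  have hDS : D ⊆ S := by rw [hD]; exact Set.diff_subset
  have hDK : ∀ u ∈ D, u ∉ K := by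
    rw [hD]; intro u hu; exact hu.2
  have hKdisjD : Disjoint K D := by
    rw [hD]; exact Set.disjoint_sdiff_right
  have hKstep : ∀ u ∈ K, ∀ w, Reaches A u w → w ∈ S → w ∈ K := by
    intro u hu w hreach hwS
    rw [hS] at hwS
    obtain ⟨k0, hk0K, hwk0⟩ := hwS
    rw [hK] at hu hk0K ⊢
    obtain ⟨C, hminC, hρC, huC⟩ := hu
    obtain ⟨C₂, hminC₂, hρC₂, hk0C₂⟩ := hk0K
    have hCC₂ : C = C₂ := by
      by_contra hne
      have := hminC₂.2 C hminC.1 hne ⟨u, huC, k0, hk0C₂, reaches_trans A hA hreach hwk0⟩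
      rw [hρC, hρC₂] at this
      exact lt_irrefl _ this
    subst hCC₂
    obtain ⟨v, hv⟩ := hminC.1
    rw [hv] at huC hk0C₂
    refine ⟨C, hminC, hρC, ?_⟩
    rw [hv]
    exact ⟨reaches_trans A hA huC.1 hreach,
      reaches_trans A hA hwk0 hk0C₂.2⟩
  have hscc : ∀ u ∈ D, specRadSub A (sccOf A u) < Real.exp β := by
    intro u huD
    have huS : u ∈ S := hDS huD
    rw [hS] at huS
    obtain ⟨k0, hk0K, huk0⟩ := huS
    have hk0K' := hk0K
    rw [hK] at hk0K'
    obtain ⟨C₂, hmin₂, hρ₂, hk0⟩ := hk0K'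
    have hne : sccOf A u ≠ C₂ := by
      intro he
      refine hDK u huD ?_
      rw [hK]
      exact ⟨C₂, hmin₂, hρ₂, he ▸ mem_sccOf_self A u⟩
    have := hmin₂.2 (sccOf A u) ⟨u, rfl⟩ hne ⟨u, mem_sccOf_self A u, k0, hk0, huk0⟩
    rwa [hρ₂] at this
  -- all eigenvalues of A_D are < e^β in absolute value
  have hspecD := spec_lt_of_all_scc A hA hrpos D hscc D (subset_refl D)
  obtain ⟨hUnit, hInvNonneg⟩ := resolvent_isUnit_and_inv_nonneg (subMat A D)
    (fun i j => hA i.val j.val) (Real.exp β) hrpos hspecD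
  refine ⟨hUnit, ?_⟩
  set hDvec : D → ℝ := ((Real.exp β • (1 : Matrix D D ℝ) - subMat A D)⁻¹ *
    A.submatrix (Subtype.val : D → V) (Subtype.val : K → V)).mulVec h0 with hhDvec
  set h : V → ℝ := fun u => if hu : u ∈ K then h0 ⟨u, hu⟩
    else if hu : u ∈ D then hDvec ⟨u, hu⟩ else 0 with hh
  have hhK : ∀ u (hu : u ∈ K), h u = h0 ⟨u, hu⟩ := by
    intro u hu; simp only [hh]; exact dif_pos hu
  have hhD : ∀ u (hu : u ∈ D), h u = hDvec ⟨u, hu⟩ := by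
    intro u hu
    simp only [hh]
    rw [dif_neg (hDK u hu)]
    exact dif_pos hu
  have hhO : ∀ u, u ∉ S → h u = 0 := by
    intro u hu
    simp only [hh]
    rw [dif_neg (fun hc => hu (hKS hc)), dif_neg (fun hc => hu (hDS hc))]
  -- nonnegativity
  have hDvecNonneg : ∀ t : D, 0 ≤ hDvec t := by
    intro t
    show 0 ≤ ∑ w : K, ((Real.exp β • (1 : Matrix D D ℝ) - subMat A D)⁻¹ *
      A.submatrix (Subtype.val : D → V) (Subtype.val : K → V)) t w * h0 w
    refine Finset.sum_nonneg fun w _ => ?_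
    refine mul_nonneg ?_ (h0pos w)
    rw [Matrix.mul_apply]
    exact Finset.sum_nonneg fun k _ =>
      mul_nonneg (hInvNonneg t k) (hA k.val w.val)
  have hpos : ∀ u, 0 ≤ h u := by
    intro u
    simp only [hh]
    by_cases hu : u ∈ K
    · rw [dif_pos hu]; exact h0pos _
    · rw [dif_neg hu]
      by_cases hu2 : u ∈ D
      · rw [dif_pos hu2]; exact hDvecNonneg _
      · rw [dif_neg hu2]
  refine ⟨h, hhK, hhD, hhO, hpos, ?_⟩
  -- harmonicity
  funext u
  show (∑ w : V, A u w * h w) = (Real.exp β • h) u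
  rw [Pi.smul_apply, smul_eq_mul]
  by_cases huK : u ∈ K
  · -- row in K
    have hzero : ∀ w, w ∉ K → A u w * h w = 0 := by
      intro w hwK
      by_cases hwD : w ∈ D
      · have : A u w = 0 := by
          by_contra hne
          have hpos' : 0 < A u w := lt_of_le_of_ne (hA u w) (Ne.symm hne)
          have : w ∈ K := hKstep u huK w ⟨1, by rwa [pow_one]⟩ (hDS hwD)
          exact hwK this
        rw [this, zero_mul]
      · have : h w = 0 := by
          simp only [hh]
          rw [dif_neg hwK, dif_neg hwD]
        rw [this, mul_zero]
    rw [sum_eq_sum_subtype_of_support K _ hzero]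
    have he1 : ∀ w : K, A u w.val * h w.val = (subMat A K) ⟨u, huK⟩ w * h0 w := by
      intro w
      rw [hhK w.val w.2]
      rfl
    rw [Finset.sum_congr rfl fun w _ => he1 w,
      show (∑ w : K, (subMat A K) ⟨u, huK⟩ w * h0 w)
        = (subMat A K).mulVec h0 ⟨u, huK⟩ from rfl,
      h0harm, Pi.smul_apply, smul_eq_mul, hhK u huK]
  · by_cases huD : u ∈ D
    · -- row in D
      have hsupp : ∀ v, v ∉ K → v ∉ D → A u v * h v = 0 := by
        intro v hvK hvD
        simp only [hh]
        rw [dif_neg hvK, dif_neg hvD, mul_zero]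
      rw [sum_split_two K D hKdisjD _ hsupp]
      have heK : (∑ w : K, A u w.val * h w.val)
          = (A.submatrix (Subtype.val : D → V) (Subtype.val : K → V)).mulVec h0 ⟨u, huD⟩ := by
        refine Finset.sum_congr rfl fun w _ => ?_
        rw [hhK w.val w.2]
        rfl
      have heD : (∑ w : D, A u w.val * h w.val)
          = (subMat A D).mulVec hDvec ⟨u, huD⟩ := by
        refine Finset.sum_congr rfl fun w _ => ?_
        rw [hhD w.val w.2]
        rfl
      rw [heK, heD]
      have hdet : IsUnit (Real.exp β • (1 : Matrix D D ℝ) - subMat A D).det :=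
        (Matrix.isUnit_iff_isUnit_det _).1 hUnit
      have hkey : (Real.exp β • (1 : Matrix D D ℝ) - subMat A D).mulVec hDvec
          = (A.submatrix (Subtype.val : D → V) (Subtype.val : K → V)).mulVec h0 := by
        rw [hhDvec, Matrix.mulVec_mulVec, ← Matrix.mul_assoc,
          Matrix.mul_nonsing_inv _ hdet, Matrix.one_mul]
      have hkey2 := congrFun hkey ⟨u, huD⟩
      rw [Matrix.sub_mulVec, Matrix.smul_mulVec, Matrix.one_mulVec] at hkey2
      have : Real.exp β * hDvec ⟨u, huD⟩ - (subMat A D).mulVec hDvec ⟨u, huD⟩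
          = (A.submatrix (Subtype.val : D → V) (Subtype.val : K → V)).mulVec h0 ⟨u, huD⟩ := by
        simpa using hkey2
      rw [hhD u huD]
      linarith [this]
    · -- row outside S
      have huS : u ∉ S := by
        intro hc
        rw [hS] at hc
        obtain ⟨k0, hk0K, huk0⟩ := hc
        -- u reaches K, so u ∈ S; but u ∉ K and u ∉ D means u ∉ S: contradiction
        exact huD (by rw [hD]; exact ⟨by rw [hS]; exact ⟨k0, hk0K, huk0⟩, huK⟩)
      have hzero : ∀ w : V, A u w * h w = 0 := by
        intro w
        by_cases hAz : A u w = 0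
        · rw [hAz, zero_mul]
        · have hpos' : 0 < A u w := lt_of_le_of_ne (hA u w) (Ne.symm hAz)
          have hwS : w ∉ S := by
            intro hwS
            rw [hS] at hwS
            obtain ⟨k0, hk0K, hwk0⟩ := hwS
            refine huS ?_
            rw [hS]
            exact ⟨k0, hk0K, reaches_trans A hA ⟨1, by rwa [pow_one]⟩ hwk0⟩
          rw [hhO w hwS, mul_zero]
      rw [Finset.sum_congr rfl fun w _ => hzero w, Finset.sum_const_zero, hhO u huS, mul_zero]
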